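/- Let F be a field, G the dihedral group of order 2n (n odd, gcd(n, char F) = 1 if char F > 0), H ⊆ G cyclic of order n, and e a primitive idempotent of FH with e·ē = 0 (i.e., ē ≠ e). Then e + ē is a central idempotent of FG, and the left ideal C = FG·e satisfies C·C̄ = 0; in particular ⟨c, c′⟩ = 0 for all c, c′ ∈ C, so C is a self-orthogonal code. -/

import Mathlib

/-- The bar map on a group algebra, sending `∑ a_x x` to `∑ a_x x⁻¹`. -/
noncomputable def MonoidAlgebra.bar {F G : Type*} [Semiring F] [Group G]
    (a : MonoidAlgebra F G) : MonoidAlgebra F G :=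
  MonoidAlgebra.ofCoeff (Finsupp.equivMapDomain (Equiv.inv G) a.coeff)

namespace MonoidAlgebra

@[simp] lemma bar_apply {F G : Type*} [Semiring F] [Group G]
    (a : MonoidAlgebra F G) (x : G) : (bar a).coeff x = a.coeff x⁻¹ := rfl

@[simp] lemma bar_bar {F G : Type*} [Semiring F] [Group G]
    (a : MonoidAlgebra F G) : bar (bar a) = a := by
  ext x; simp

@[simp] lemma bar_add {F G : Type*} [Semiring F] [Group G]
    (a b : MonoidAlgebra F G) : bar (a + b) = bar a + bar b := by
  ext x
  rw [bar_apply, coeff_add, Finsupp.add_apply, coeff_add, Finsupp.add_apply, bar_apply, bar_apply]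

@[simp] lemma bar_zero {F G : Type*} [Semiring F] [Group G] :
    bar (0 : MonoidAlgebra F G) = 0 := by
  ext x; simp

@[simp] lemma bar_single {F G : Type*} [Semiring F] [Group G] (g : G) (r : F) :
    bar (single g r : MonoidAlgebra F G) = single g⁻¹ r := by
  classical
  ext x
  rw [bar_apply, coeff_single, coeff_single, Finsupp.single_apply, Finsupp.single_apply]
  by_cases h : g = x⁻¹
  · rw [if_pos h, if_pos (by rw [h, inv_inv])]
  · rw [if_neg h, if_neg fun hc => h (by rw [← hc, inv_inv])]

lemma bar_mul {F G : Type*} [CommSemiring F] [Group G] (a b : MonoidAlgebra F G) :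
    bar (a * b) = bar b * bar a := by
  induction a using MonoidAlgebra.induction with
  | zero => simp
  | single_add g r f hg hr ih =>
    rw [add_mul, bar_add, bar_add, mul_add, ih]
    congr 1
    ext x
    rw [bar_apply, MonoidAlgebra.coeff_single_mul_apply, bar_single,
      MonoidAlgebra.coeff_mul_single_apply, bar_apply]
    rw [mul_inv_rev, inv_inv, mul_comm]

lemma inner_eq_bar_mul_apply_one {F G : Type*} [Semiring F] [Group G] [Fintype G]
    (a b : MonoidAlgebra F G) :
    (a * bar b).coeff 1 = ∑ g : G, a.coeff g * b.coeff g := by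
  rw [MonoidAlgebra.coeff_mul_antidiag a (bar b) 1
    ((Finset.univ : Finset G).map ⟨fun g => (g, g⁻¹), Function.LeftInverse.injective (g := Prod.fst) (fun _ => rfl)⟩)]
  · rw [Finset.sum_map]
    simp
  · intro p
    simp only [Finset.mem_map, Finset.mem_univ, Function.Embedding.coeFn_mk, true_and]
    constructor
    · rintro ⟨g, rfl⟩; simp
    · intro h
      exact ⟨p.1, by rw [Prod.mk.injEq]; exact ⟨rfl, inv_eq_of_mul_eq_one_right h⟩⟩

end MonoidAlgebra

open DihedralGroup MonoidAlgebra

/-- A monoid hom from rotations into the dihedral group. -/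
def rotHom (n : ℕ) : Multiplicative (ZMod n) →* DihedralGroup n where
  toFun i := DihedralGroup.r i.toAdd
  map_one' := rfl
  map_mul' := fun _ _ => rfl

lemma rotHom_injective (n : ℕ) : Function.Injective (rotHom n) := by
  intro a b h
  have h' : DihedralGroup.r (Multiplicative.toAdd a) = DihedralGroup.r (Multiplicative.toAdd b) := h
  simpa [rotHom, DihedralGroup.r.injEq] using h'

lemma rot_supported_mem_range {F : Type*} [Semiring F] {n : ℕ}
    (a : MonoidAlgebra F (DihedralGroup n)) (ha : ∀ i : ZMod n, a.coeff (DihedralGroup.sr i) = 0) :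
    ∃ a' : MonoidAlgebra F (Multiplicative (ZMod n)),
      a = MonoidAlgebra.mapDomainRingHom F (rotHom n) a' := by
  refine ⟨MonoidAlgebra.comapDomain (rotHom n) (rotHom_injective n) a, ?_⟩
  show a = MonoidAlgebra.ofCoeff (Finsupp.mapDomain (rotHom n) _)
  ext x
  rw [coeff_ofCoeff]
  rcases x with i | i
  · have : (DihedralGroup.r i : DihedralGroup n) = rotHom n (Multiplicative.ofAdd i) := rfl
    rw [this, Finsupp.mapDomain_apply (rotHom_injective n), coeff_comapDomain, Finsupp.comapDomain_apply]
  · rw [Finsupp.mapDomain_notin_range, ha]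
    rintro ⟨j, hj⟩
    simp [rotHom] at hj

lemma rot_supported_commute {F : Type*} [CommSemiring F] {n : ℕ}
    (a b : MonoidAlgebra F (DihedralGroup n))
    (ha : ∀ i : ZMod n, a.coeff (DihedralGroup.sr i) = 0)
    (hb : ∀ i : ZMod n, b.coeff (DihedralGroup.sr i) = 0) :
    a * b = b * a := by
  obtain ⟨a', rfl⟩ := rot_supported_mem_range a ha
  obtain ⟨b', rfl⟩ := rot_supported_mem_range b hb
  rw [← map_mul, ← map_mul, mul_comm]

/-- Let `F` be a field, `G` the dihedral group of order `2n` (`n` odd, coprime to the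
characteristic), `H ⊆ G` the cyclic subgroup of rotations, and `e` a primitive idempotent
of `FH` with `e·ē = 0` (i.e. `ē ≠ e`). Then `e + ē` is a central idempotent of `FG`, and
the left ideal `C = FG·e` satisfies `C·C̄ = 0`; in particular `⟨c, c′⟩ = 0` for all
`c, c′ ∈ C`, so `C` is self-orthogonal. -/
theorem selforthogonal_component (F : Type*) [Field F] (n : ℕ) [NeZero n] (hn : Odd n)
    (hchar : ((n : F) ≠ 0))
    (e : MonoidAlgebra F (DihedralGroup n))
    (hH : ∀ i : ZMod n, e.coeff (DihedralGroup.sr i) = 0)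
    (hidem : IsIdempotentElem e)
    (hne : e ≠ 0)
    (hprim : ∀ f : MonoidAlgebra F (DihedralGroup n),
      (∀ i : ZMod n, f.coeff (DihedralGroup.sr i) = 0) → IsIdempotentElem f → f * e = f →
        f = 0 ∨ f = e)
    (horth : e * MonoidAlgebra.bar e = 0) :
    IsIdempotentElem (e + MonoidAlgebra.bar e) ∧
    (∀ x : MonoidAlgebra F (DihedralGroup n),
      (e + MonoidAlgebra.bar e) * x = x * (e + MonoidAlgebra.bar e)) ∧
    (∀ c c' : MonoidAlgebra F (DihedralGroup n),
      (∃ m, c = m * e) → (∃ m, c' = m * e) →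
        c * MonoidAlgebra.bar c' = 0 ∧ ∑ g : DihedralGroup n, c.coeff g * c'.coeff g = 0) := by
  have hebH : ∀ i : ZMod n, (bar e).coeff (DihedralGroup.sr i) = 0 := fun i => hH i
  have heb_idem : bar e * bar e = bar e := by rw [← bar_mul, hidem.eq]
  have hebe : bar e * e = 0 := by
    rw [rot_supported_commute _ _ hebH hH]; exact horth
  have hmain : (e + bar e) * (e + bar e) = e + bar e := by
    rw [add_mul, mul_add, mul_add, hidem.eq, heb_idem, horth, hebe, add_zero, zero_add]
  refine ⟨hmain, ?_, ?_⟩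
  · -- centrality
    have ha_sr : ∀ i : ZMod n, (e + bar e).coeff (DihedralGroup.sr i) = 0 := by
      intro i
      rw [coeff_add, Finsupp.add_apply, hH i, hebH i, add_zero]
    have hbar : bar (e + bar e) = e + bar e := by
      rw [bar_add, bar_bar, add_comm]
    have hinv : ∀ x : DihedralGroup n, (e + bar e).coeff x⁻¹ = (e + bar e).coeff x := by
      intro x; rw [← bar_apply, hbar]
    have hconj : ∀ g y : DihedralGroup n, (e + bar e).coeff (y * g) = (e + bar e).coeff (g * y) := by
      rintro (i | i) (j | j)
      · rw [r_mul_r, r_mul_r, add_comm i j]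
      · rw [r_mul_sr, sr_mul_r, ha_sr, ha_sr]
      · rw [sr_mul_r, r_mul_sr, ha_sr, ha_sr]
      · rw [sr_mul_sr, sr_mul_sr, ← hinv (DihedralGroup.r (i - j))]
        congr 1
        show DihedralGroup.r (-(i - j)) = _
        rw [neg_sub]
    intro x
    induction x using MonoidAlgebra.induction_on with
    | of g =>
      ext y
      rw [MonoidAlgebra.of_apply, MonoidAlgebra.coeff_mul_single_apply,
        MonoidAlgebra.coeff_single_mul_apply, mul_one, one_mul]
      exact hconj g⁻¹ y
    | add f g hf hg => rw [mul_add, hf, hg, add_mul]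
    | smul r f hf => rw [mul_smul_comm, smul_mul_assoc, hf]
  · -- self-orthogonality
    rintro c c' ⟨m, rfl⟩ ⟨m', rfl⟩
    have hzero : m * e * MonoidAlgebra.bar (m' * e) = 0 := by
      rw [bar_mul, ← mul_assoc, mul_assoc m, horth, mul_zero, zero_mul]
    refine ⟨hzero, ?_⟩
    rw [← inner_eq_bar_mul_apply_one, hzero]
    simp
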